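/- arXiv:1801.00518 — 5 statements merged into one kernel-verified Lean document; each statement's English description precedes it below -/
import Mathlib

section
/- There exists an absolute constant C ≥ 1 such that the following holds. Let p ≥ 1, k ∈ {1,…,p}, and let M be a nonzero p×p real matrix that is k-sparse. Let r = ‖M‖_F²/‖M‖₂² be the stable rank of M. Then there exist subsets I, J ⊆ {1,…,p} with |I| ≤ C·k·r and |J| ≤ C·k·r·log(e·r) such that ‖M_{IJ}‖₂ ≥ (1/8)·‖M‖₂, where M_{IJ} denotes the submatrix of M with rows indexed by I and columns indexed by J. -/
open Real

noncomputable section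

/-- Spectral norm (largest singular value) of a real matrix. -/
def specNorm {m n : Type*} [Fintype m] [Fintype n] [DecidableEq n]
    (A : Matrix m n ℝ) : ℝ :=
  ‖LinearMap.toContinuousLinearMap (Matrix.toEuclideanLin A)‖

/-- Frobenius norm of a real matrix. -/
def frobNorm {m n : Type*} [Fintype m] [Fintype n] (A : Matrix m n ℝ) : ℝ :=
  Real.sqrt (∑ i, ∑ j, (A i j) ^ 2)

/-- A matrix is `k`-sparse if every row and column has at most `k` nonzero entries. -/
def IsKSparse {p : ℕ} (k : ℕ) (M : Matrix (Fin p) (Fin p) ℝ) : Prop :=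
  (∀ i, (Finset.univ.filter fun j => M i j ≠ 0).card ≤ k) ∧
  (∀ j, (Finset.univ.filter fun i => M i j ≠ 0).card ≤ k)

end

noncomputable section SparseAuxSection

namespace SparseAux

variable {m n : Type*} [Fintype m] [Fintype n] [DecidableEq n]

def L (N : Matrix m n ℝ) : EuclideanSpace ℝ n →L[ℝ] EuclideanSpace ℝ m :=
  LinearMap.toContinuousLinearMap (Matrix.toEuclideanLin N)

lemma spec_eq (N : Matrix m n ℝ) : specNorm N = ‖L N‖ := rfl

lemma L_apply (N : Matrix m n ℝ) (x : EuclideanSpace ℝ n) (i : m) :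
    L N x i = ∑ j, N i j * x j := rfl

omit [DecidableEq n] in
lemma norm_sq_eu (x : EuclideanSpace ℝ n) : ‖x‖ ^ 2 = ∑ j, (x j) ^ 2 := by
  rw [EuclideanSpace.norm_eq, Real.sq_sqrt (by positivity)]
  simp [sq_abs]

lemma L_norm_sq (N : Matrix m n ℝ) (x : EuclideanSpace ℝ n) :
    ‖L N x‖ ^ 2 = ∑ i, (∑ j, N i j * x j) ^ 2 := by
  rw [norm_sq_eu]
  simp [L_apply]

lemma specNorm_le_of_forall (N : Matrix m n ℝ) {c : ℝ} (hc : 0 ≤ c)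
    (h : ∀ x : EuclideanSpace ℝ n, ∑ i, (∑ j, N i j * x j) ^ 2 ≤ c * ∑ j, (x j) ^ 2) :
    specNorm N ≤ Real.sqrt c := by
  rw [spec_eq]
  apply ContinuousLinearMap.opNorm_le_bound _ (Real.sqrt_nonneg c)
  intro x
  have h2 : ‖L N x‖ ^ 2 ≤ c * ‖x‖ ^ 2 := by
    rw [L_norm_sq, norm_sq_eu]; exact h x
  calc ‖L N x‖ = Real.sqrt (‖L N x‖ ^ 2) := (Real.sqrt_sq (norm_nonneg _)).symm
    _ ≤ Real.sqrt (c * ‖x‖ ^ 2) := Real.sqrt_le_sqrt h2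
    _ = Real.sqrt c * ‖x‖ := by
        rw [Real.sqrt_mul hc, Real.sqrt_sq (norm_nonneg x)]

/-- rows small in ℓ², columns `k`-sparse -/
lemma specNorm_le_sparse_col (N : Matrix m n ℝ) {c : ℝ} (hc : 0 ≤ c) (k : ℕ)
    (hrow : ∀ i, ∑ j, N i j ^ 2 ≤ c)
    (hcol : ∀ j, (Finset.univ.filter fun i => N i j ≠ 0).card ≤ k) :
    specNorm N ≤ Real.sqrt (k * c) := by
  apply specNorm_le_of_forall N (by positivity)
  intro x
  have step1 : ∀ i, (∑ j, N i j * x j) ^ 2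
      ≤ c * ∑ j ∈ Finset.univ.filter (fun j => N i j ≠ 0), (x j) ^ 2 := by
    intro i
    have hres : ∑ j, N i j * x j
        = ∑ j ∈ Finset.univ.filter (fun j => N i j ≠ 0), N i j * x j := by
      rw [Finset.sum_filter]
      apply Finset.sum_congr rfl
      intro j _
      by_cases h : N i j = 0 <;> simp [h]
    rw [hres]
    calc (∑ j ∈ Finset.univ.filter (fun j => N i j ≠ 0), N i j * x j) ^ 2
        ≤ (∑ j ∈ Finset.univ.filter (fun j => N i j ≠ 0), N i j ^ 2)
          * ∑ j ∈ Finset.univ.filter (fun j => N i j ≠ 0), (x j) ^ 2 :=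
          Finset.sum_mul_sq_le_sq_mul_sq _ _ _
      _ ≤ c * ∑ j ∈ Finset.univ.filter (fun j => N i j ≠ 0), (x j) ^ 2 := by
          apply mul_le_mul_of_nonneg_right _ (by positivity)
          calc ∑ j ∈ Finset.univ.filter (fun j => N i j ≠ 0), N i j ^ 2
              ≤ ∑ j, N i j ^ 2 :=
                Finset.sum_le_sum_of_subset_of_nonneg (Finset.subset_univ _)
                  (fun _ _ _ => by positivity)
            _ ≤ c := hrow i
  calc ∑ i, (∑ j, N i j * x j) ^ 2
      ≤ ∑ i, c * ∑ j ∈ Finset.univ.filter (fun j => N i j ≠ 0), (x j) ^ 2 :=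
        Finset.sum_le_sum fun i _ => step1 i
    _ = c * ∑ i, ∑ j, (if N i j ≠ 0 then (x j) ^ 2 else 0) := by
        rw [Finset.mul_sum]
        exact Finset.sum_congr rfl fun i _ => by rw [Finset.sum_filter]
    _ = c * ∑ j, ((Finset.univ.filter fun i => N i j ≠ 0).card : ℝ) * (x j) ^ 2 := by
        rw [Finset.sum_comm]
        congr 1
        apply Finset.sum_congr rfl
        intro j _
        rw [← Finset.sum_filter, Finset.sum_const, nsmul_eq_mul]
    _ ≤ c * ∑ j, (k : ℝ) * (x j) ^ 2 := by
        apply mul_le_mul_of_nonneg_left _ hc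
        apply Finset.sum_le_sum
        intro j _
        apply mul_le_mul_of_nonneg_right _ (by positivity)
        exact_mod_cast hcol j
    _ = (k * c) * ∑ j, (x j) ^ 2 := by rw [← Finset.mul_sum]; ring

/-- columns small in ℓ², rows `k`-sparse -/
lemma specNorm_le_sparse_row (N : Matrix m n ℝ) {c : ℝ} (hc : 0 ≤ c) (k : ℕ)
    (hcol : ∀ j, ∑ i, N i j ^ 2 ≤ c)
    (hrow : ∀ i, (Finset.univ.filter fun j => N i j ≠ 0).card ≤ k) :
    specNorm N ≤ Real.sqrt (k * c) := by
  apply specNorm_le_of_forall N (by positivity)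
  intro x
  have step1 : ∀ i, (∑ j, N i j * x j) ^ 2 ≤ (k : ℝ) * ∑ j, (N i j * x j) ^ 2 := by
    intro i
    have hres : ∑ j, N i j * x j
        = ∑ j ∈ Finset.univ.filter (fun j => N i j ≠ 0), N i j * x j := by
      rw [Finset.sum_filter]
      apply Finset.sum_congr rfl
      intro j _
      by_cases h : N i j = 0 <;> simp [h]
    rw [hres]
    calc (∑ j ∈ Finset.univ.filter (fun j => N i j ≠ 0), N i j * x j) ^ 2
        ≤ ((Finset.univ.filter (fun j => N i j ≠ 0)).card : ℝ)
          * ∑ j ∈ Finset.univ.filter (fun j => N i j ≠ 0), (N i j * x j) ^ 2 :=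
          sq_sum_le_card_mul_sum_sq
      _ ≤ (k : ℝ) * ∑ j, (N i j * x j) ^ 2 := by
          apply mul_le_mul (by exact_mod_cast hrow i)
            (Finset.sum_le_sum_of_subset_of_nonneg (Finset.subset_univ _)
              (fun _ _ _ => by positivity)) (by positivity) (by positivity)
  calc ∑ i, (∑ j, N i j * x j) ^ 2
      ≤ ∑ i, (k : ℝ) * ∑ j, (N i j * x j) ^ 2 := Finset.sum_le_sum fun i _ => step1 i
    _ = (k : ℝ) * ∑ j, (∑ i, N i j ^ 2) * (x j) ^ 2 := by
        rw [← Finset.mul_sum, Finset.sum_comm]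
        congr 1
        apply Finset.sum_congr rfl
        intro j _
        rw [Finset.sum_mul]
        exact Finset.sum_congr rfl fun i _ => by ring
    _ ≤ (k : ℝ) * ∑ j, c * (x j) ^ 2 := by
        apply mul_le_mul_of_nonneg_left _ (by positivity)
        exact Finset.sum_le_sum fun j _ =>
          mul_le_mul_of_nonneg_right (hcol j) (by positivity)
    _ = (k * c) * ∑ j, (x j) ^ 2 := by rw [← Finset.mul_sum]; ring

lemma specNorm_le_frob (N : Matrix m n ℝ) :
    specNorm N ≤ Real.sqrt (∑ i, ∑ j, N i j ^ 2) := by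
  apply specNorm_le_of_forall N (by positivity)
  intro x
  calc ∑ i, (∑ j, N i j * x j) ^ 2
      ≤ ∑ i, (∑ j, N i j ^ 2) * ∑ j, (x j) ^ 2 :=
        Finset.sum_le_sum fun i _ => Finset.sum_mul_sq_le_sq_mul_sq _ _ _
    _ = (∑ i, ∑ j, N i j ^ 2) * ∑ j, (x j) ^ 2 := by rw [Finset.sum_mul]

lemma specNorm_pos {p : ℕ} (M : Matrix (Fin p) (Fin p) ℝ) (hM : M ≠ 0) :
    0 < specNorm M := by
  rw [spec_eq, norm_pos_iff]
  intro h0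
  apply hM
  have h1 : Matrix.toEuclideanLin M = 0 := (LinearEquiv.map_eq_zero_iff _).mp h0
  exact (LinearEquiv.map_eq_zero_iff _).mp h1

lemma specNorm_padded_le {p : ℕ} (M : Matrix (Fin p) (Fin p) ℝ) (I J : Finset (Fin p)) :
    specNorm (fun i j => if i ∈ I ∧ j ∈ J then M i j else 0 : Matrix (Fin p) (Fin p) ℝ)
      ≤ specNorm (M.submatrix (fun i : ↥I => (i : Fin p)) (fun j : ↥J => (j : Fin p))) := by
  set A : Matrix (Fin p) (Fin p) ℝ := fun i j => if i ∈ I ∧ j ∈ J then M i j else 0 with hA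
  set S := M.submatrix (fun i : ↥I => (i : Fin p)) (fun j : ↥J => (j : Fin p)) with hS
  rw [spec_eq, spec_eq]
  apply ContinuousLinearMap.opNorm_le_bound _ (norm_nonneg _)
  intro x
  set x' : EuclideanSpace ℝ ↥J := WithLp.toLp 2 (fun j => x (j : Fin p)) with hx'
  have hnormx : ‖x'‖ ≤ ‖x‖ := by
    have h1 : ‖x'‖ ^ 2 ≤ ‖x‖ ^ 2 := by
      rw [norm_sq_eu, norm_sq_eu]
      calc ∑ j : ↥J, (x' j) ^ 2 = ∑ j ∈ J, (x j) ^ 2 :=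
          Finset.sum_coe_sort J (fun j => (x j) ^ 2)
        _ ≤ ∑ j, (x j) ^ 2 :=
          Finset.sum_le_sum_of_subset_of_nonneg (Finset.subset_univ _)
            (fun _ _ _ => by positivity)
    calc ‖x'‖ = Real.sqrt (‖x'‖ ^ 2) := (Real.sqrt_sq (norm_nonneg _)).symm
      _ ≤ Real.sqrt (‖x‖ ^ 2) := Real.sqrt_le_sqrt h1
      _ = ‖x‖ := Real.sqrt_sq (norm_nonneg _)
  have hkey : ‖L A x‖ = ‖L S x'‖ := by
    have h2 : ‖L A x‖ ^ 2 = ‖L S x'‖ ^ 2 := by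
      rw [L_norm_sq, L_norm_sq]
      have inner_eq : ∀ i : Fin p, (∑ j, A i j * x j)
          = if i ∈ I then ∑ j ∈ J, M i j * x j else 0 := by
        intro i
        by_cases hi : i ∈ I
        · simp only [hi, if_true]
          calc ∑ j, A i j * x j = ∑ j, (if j ∈ J then M i j * x j else 0) :=
              Finset.sum_congr rfl fun j _ => by
                by_cases hj : j ∈ J <;> simp [hA, hi, hj]
            _ = ∑ j ∈ J, M i j * x j := by
              rw [Finset.sum_ite_mem, Finset.univ_inter]
        · simp [hA, hi]
      have hL : ∑ i, (∑ j, A i j * x j) ^ 2 = ∑ i ∈ I, (∑ j ∈ J, M i j * x j) ^ 2 := by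
        calc ∑ i, (∑ j, A i j * x j) ^ 2
            = ∑ i, (if i ∈ I then (∑ j ∈ J, M i j * x j) ^ 2 else 0) :=
            Finset.sum_congr rfl fun i _ => by
              rw [inner_eq i]
              by_cases hi : i ∈ I <;> simp [hi]
          _ = ∑ i ∈ I, (∑ j ∈ J, M i j * x j) ^ 2 := by
            rw [Finset.sum_ite_mem, Finset.univ_inter]
      have hR : ∑ i' : ↥I, (∑ j' : ↥J, S i' j' * x' j') ^ 2
          = ∑ i ∈ I, (∑ j ∈ J, M i j * x j) ^ 2 := by
        rw [← Finset.sum_coe_sort I (fun i => (∑ j ∈ J, M i j * x j) ^ 2)]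
        apply Finset.sum_congr rfl
        intro i' _
        congr 1
        exact Finset.sum_coe_sort J (fun j => M (i' : Fin p) j * x j)
      rw [hL, hR]
    calc ‖L A x‖ = Real.sqrt (‖L A x‖ ^ 2) := (Real.sqrt_sq (norm_nonneg _)).symm
      _ = Real.sqrt (‖L S x'‖ ^ 2) := by rw [h2]
      _ = ‖L S x'‖ := Real.sqrt_sq (norm_nonneg _)
  calc ‖L A x‖ = ‖L S x'‖ := hkey
    _ ≤ ‖L S‖ * ‖x'‖ := (L S).le_opNorm x'
    _ ≤ ‖L S‖ * ‖x‖ := mul_le_mul_of_nonneg_left hnormx (norm_nonneg _)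

end SparseAux

end SparseAuxSection

/-- a `k`-sparse matrix of stable rank `r` has an
`O(kr) × O(kr log(er))` submatrix carrying a constant fraction of its spectral norm. -/
theorem sparse_matrix_has_large_small_submatrix :
    ∃ C : ℝ, 1 ≤ C ∧
      ∀ (p k : ℕ), 1 ≤ p → 1 ≤ k → k ≤ p →
        ∀ M : Matrix (Fin p) (Fin p) ℝ, M ≠ 0 → IsKSparse k M →
          ∀ r : ℝ, r = frobNorm M ^ 2 / specNorm M ^ 2 →
            ∃ I J : Finset (Fin p),
              (I.card : ℝ) ≤ C * k * r ∧
              (J.card : ℝ) ≤ C * k * r * Real.log (Real.exp 1 * r) ∧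
              (1 / 8) * specNorm M ≤
                specNorm (M.submatrix (fun i : ↥I => (i : Fin p)) (fun j : ↥J => (j : Fin p))) := by
  classical
  refine ⟨64, by norm_num, ?_⟩
  intro p k hp hk hkp M hM hKS r hr
  obtain ⟨hks1, hks2⟩ := hKS
  have hσ : 0 < specNorm M := SparseAux.specNorm_pos M hM
  have hF2 : frobNorm M ^ 2 = ∑ i, ∑ j, M i j ^ 2 := Real.sq_sqrt (by positivity)
  have hσleF : specNorm M ≤ frobNorm M := SparseAux.specNorm_le_frob M
  have hr1 : (1 : ℝ) ≤ r := by
    rw [hr]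
    rw [one_le_div (by positivity)]
    exact pow_le_pow_left₀ hσ.le hσleF 2
  have hk0 : (0 : ℝ) < (k : ℝ) := by exact_mod_cast hk
  set t : ℝ := specNorm M ^ 2 / (64 * k) with htdef
  have ht : 0 < t := by positivity
  set I : Finset (Fin p) := Finset.univ.filter fun i => t ≤ ∑ j, M i j ^ 2 with hIdef
  set J : Finset (Fin p) := Finset.univ.filter fun j => t ≤ ∑ i, M i j ^ 2 with hJdef
  -- cardinality bounds
  have hI1 : (I.card : ℝ) * t ≤ frobNorm M ^ 2 := by
    rw [hF2]
    calc (I.card : ℝ) * t = ∑ _i ∈ I, t := by rw [Finset.sum_const, nsmul_eq_mul]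
      _ ≤ ∑ i ∈ I, ∑ j, M i j ^ 2 := Finset.sum_le_sum fun i hi => by
          rw [hIdef] at hi
          exact (Finset.mem_filter.mp hi).2
      _ ≤ ∑ i, ∑ j, M i j ^ 2 :=
          Finset.sum_le_sum_of_subset_of_nonneg (Finset.subset_univ _)
            (fun _ _ _ => by positivity)
  have hJ1 : (J.card : ℝ) * t ≤ frobNorm M ^ 2 := by
    rw [hF2, Finset.sum_comm]
    calc (J.card : ℝ) * t = ∑ _j ∈ J, t := by rw [Finset.sum_const, nsmul_eq_mul]
      _ ≤ ∑ j ∈ J, ∑ i, M i j ^ 2 := Finset.sum_le_sum fun j hj => by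
          rw [hJdef] at hj
          exact (Finset.mem_filter.mp hj).2
      _ ≤ ∑ j, ∑ i, M i j ^ 2 :=
          Finset.sum_le_sum_of_subset_of_nonneg (Finset.subset_univ _)
            (fun _ _ _ => by positivity)
  have hdiv : frobNorm M ^ 2 / t = 64 * (k : ℝ) * r := by
    rw [hr, htdef]
    field_simp
  have hIcard : (I.card : ℝ) ≤ 64 * (k : ℝ) * r := by
    rw [← hdiv]
    exact (le_div_iff₀ ht).mpr hI1
  have hJcard : (J.card : ℝ) ≤ 64 * (k : ℝ) * r := by
    rw [← hdiv]
    exact (le_div_iff₀ ht).mpr hJ1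
  have hlog : 1 ≤ Real.log (Real.exp 1 * r) := by
    rw [Real.log_mul (Real.exp_ne_zero 1) (by linarith), Real.log_exp]
    have := Real.log_nonneg hr1
    linarith
  have hJcard' : (J.card : ℝ) ≤ 64 * (k : ℝ) * r * Real.log (Real.exp 1 * r) := by
    calc (J.card : ℝ) ≤ 64 * (k : ℝ) * r := hJcard
      _ ≤ 64 * (k : ℝ) * r * Real.log (Real.exp 1 * r) :=
        le_mul_of_one_le_right (by positivity) hlog
  -- decomposition
  set A : Matrix (Fin p) (Fin p) ℝ := fun i j => if i ∈ I ∧ j ∈ J then M i j else 0 with hAdef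
  set B : Matrix (Fin p) (Fin p) ℝ := fun i j => if i ∈ I ∧ j ∉ J then M i j else 0 with hBdef
  set Cm : Matrix (Fin p) (Fin p) ℝ := fun i j => if i ∉ I then M i j else 0 with hCdef
  have hdecomp : M = A + B + Cm := by
    funext i j
    rw [Matrix.add_apply, Matrix.add_apply]
    by_cases hi : i ∈ I <;> by_cases hj : j ∈ J <;>
      simp [hAdef, hBdef, hCdef, Matrix.add_apply, Pi.add_apply, hi, hj]
  have hkt : (k : ℝ) * t = (specNorm M / 8) ^ 2 := by
    rw [htdef]
    field_simp
    ring
  -- bound on Cm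
  have hCspec : specNorm Cm ≤ specNorm M / 8 := by
    have hrowC : ∀ i, ∑ j, Cm i j ^ 2 ≤ t := by
      intro i
      by_cases hi : i ∈ I
      · have : ∀ j, Cm i j = 0 := fun j => by simp [hCdef, hi]
        simp only [this]
        simp [ht.le]
      · have hlt : ¬ t ≤ ∑ j, M i j ^ 2 := by
          rw [hIdef] at hi
          simpa using hi
        calc ∑ j, Cm i j ^ 2 = ∑ j, M i j ^ 2 := by
              apply Finset.sum_congr rfl
              intro j _
              simp [hCdef, hi]
          _ ≤ t := (not_le.mp hlt).le
    have hcolC : ∀ j, (Finset.univ.filter fun i => Cm i j ≠ 0).card ≤ k := by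
      intro j
      refine le_trans (Finset.card_le_card ?_) (hks2 j)
      intro i hi
      simp only [Finset.mem_filter] at hi ⊢
      refine ⟨hi.1, fun h => hi.2 ?_⟩
      simp [hCdef, h]
    have := SparseAux.specNorm_le_sparse_col Cm ht.le k hrowC hcolC
    rwa [hkt, Real.sqrt_sq (by positivity)] at this
  -- bound on B
  have hBspec : specNorm B ≤ specNorm M / 8 := by
    have hcolB : ∀ j, ∑ i, B i j ^ 2 ≤ t := by
      intro j
      by_cases hj : j ∈ J
      · have : ∀ i, B i j = 0 := fun i => by simp [hBdef, hj]
        simp only [this]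
        simp [ht.le]
      · have hlt : ¬ t ≤ ∑ i, M i j ^ 2 := by
          rw [hJdef] at hj
          simpa using hj
        calc ∑ i, B i j ^ 2 ≤ ∑ i, M i j ^ 2 := by
              apply Finset.sum_le_sum
              intro i _
              by_cases hi : i ∈ I
              · simp [hBdef, hi, hj]
              · simp [hBdef, hi]
                positivity
          _ ≤ t := (not_le.mp hlt).le
    have hrowB : ∀ i, (Finset.univ.filter fun j => B i j ≠ 0).card ≤ k := by
      intro i
      refine le_trans (Finset.card_le_card ?_) (hks1 i)
      intro j hj
      simp only [Finset.mem_filter] at hj ⊢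
      refine ⟨hj.1, fun h => hj.2 ?_⟩
      simp [hBdef, h]
    have := SparseAux.specNorm_le_sparse_row B ht.le k hcolB hrowB
    rwa [hkt, Real.sqrt_sq (by positivity)] at this
  -- triangle inequality
  have htri : specNorm M ≤ specNorm A + specNorm B + specNorm Cm := by
    have hLsum : SparseAux.L M = SparseAux.L A + SparseAux.L B + SparseAux.L Cm := by
      rw [hdecomp]
      simp [SparseAux.L, map_add]
    rw [SparseAux.spec_eq, hLsum]
    calc ‖SparseAux.L A + SparseAux.L B + SparseAux.L Cm‖
        ≤ ‖SparseAux.L A + SparseAux.L B‖ + ‖SparseAux.L Cm‖ := norm_add_le _ _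
      _ ≤ ‖SparseAux.L A‖ + ‖SparseAux.L B‖ + ‖SparseAux.L Cm‖ := by
          have := norm_add_le (SparseAux.L A) (SparseAux.L B)
          linarith
      _ = specNorm A + specNorm B + specNorm Cm := by
          rw [SparseAux.spec_eq A, SparseAux.spec_eq B, SparseAux.spec_eq Cm]
  have hApad : specNorm A ≤ specNorm
      (M.submatrix (fun i : ↥I => (i : Fin p)) (fun j : ↥J => (j : Fin p))) := by
    rw [hAdef]
    exact SparseAux.specNorm_padded_le M I J
  refine ⟨I, J, hIcard, hJcard', ?_⟩
  have h34 : (3 / 4) * specNorm M ≤ specNorm A := by linarith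
  calc (1 / 8) * specNorm M ≤ (3 / 4) * specNorm M := by linarith
    _ ≤ specNorm A := h34
    _ ≤ _ := hApad
end

section
/- Let p ≥ 1, 1 ≤ k ≤ p, ε ∈ (0,1), and set τ = √(2·log(4p²/ε)). Observe X = M + Z where Z has i.i.d. N(0,1) entries. Let X^th be the entrywise thresholded matrix with entries X^th_{ij} = X_{ij}·1{|X_{ij}| ≥ τ}, and define the test ψ(X) = 1{‖X^th‖₂ ≥ 2kτ}. If λ ≥ 4kτ = 4k·√(2·log(4p²/ε)), then P₀(ψ=1) + sup_{M ∈ Θ(p,k,λ)} P_M(ψ=0) ≤ ε. -/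
open MeasureTheory ProbabilityTheory Real Filter
open scoped ENNReal NNReal

noncomputable section

/-- Law of a `p × p` matrix with i.i.d. standard Gaussian entries. -/
def stdGaussMatrix (p : ℕ) : Measure (Fin p → Fin p → ℝ) :=
  Measure.pi fun _ => Measure.pi fun _ => gaussianReal 0 1

/-- Law of the observation `X = M + Z` with `Z` an i.i.d. standard Gaussian matrix. -/
def PM {p : ℕ} (M : Matrix (Fin p) (Fin p) ℝ) : Measure (Fin p → Fin p → ℝ) :=
  (stdGaussMatrix p).map (fun z => fun i j => M i j + z i j)

/-- The alternative hypothesis `Θ(p,k,λ)`: `k`-sparse matrices of spectral norm at least `λ`. -/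
def ThetaSet (p k : ℕ) (lam : ℝ) : Set (Matrix (Fin p) (Fin p) ℝ) :=
  {M | IsKSparse k M ∧ lam ≤ specNorm M}

/-- Entrywise hard thresholding of a matrix at level `τ`. -/
def hardThreshold {p : ℕ} (τ : ℝ) (x : Fin p → Fin p → ℝ) : Matrix (Fin p) (Fin p) ℝ :=
  Matrix.of fun i j => if τ ≤ |x i j| then x i j else 0

end

section Aux

variable {p : ℕ}

lemma specNorm_zero : specNorm (0 : Matrix (Fin p) (Fin p) ℝ) = 0 := by
  unfold specNorm; rw [map_zero, map_zero, norm_zero]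

lemma specNorm_triangle_sub (A B : Matrix (Fin p) (Fin p) ℝ) :
    specNorm A ≤ specNorm B + specNorm (A - B) := by
  have h : A = B + (A - B) := by abel
  calc specNorm A = specNorm (B + (A - B)) := by rw [← h]
    _ ≤ specNorm B + specNorm (A - B) := by
        unfold specNorm; rw [map_add, map_add]; exact norm_add_le _ _

lemma continuous_specNorm : Continuous (specNorm : Matrix (Fin p) (Fin p) ℝ → ℝ) := by
  have : Continuous (fun A : Matrix (Fin p) (Fin p) ℝ =>
      LinearMap.toContinuousLinearMap (Matrix.toEuclideanLin A)) := by
    exact LinearMap.continuous_of_finiteDimensional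
      (f := ((Matrix.toEuclideanLin (𝕜 := ℝ) (m := Fin p) (n := Fin p)).trans
        LinearMap.toContinuousLinearMap).toLinearMap)
  exact continuous_norm.comp this

lemma row_abs_sum_le {k : ℕ} {a : ℝ} (ha : 0 ≤ a) (f : Fin p → ℝ)
    (hcard : (Finset.univ.filter fun j => f j ≠ 0).card ≤ k)
    (hb : ∀ j, |f j| ≤ a) : ∑ j, |f j| ≤ k * a := by
  have h0 : ∑ j, |f j| = ∑ j ∈ Finset.univ.filter fun j => f j ≠ 0, |f j| := by
    refine (Finset.sum_subset (Finset.filter_subset _ _) ?_).symm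
    intro j _ hj
    simp only [Finset.mem_filter, Finset.mem_univ, true_and, not_not] at hj
    simp [hj]
  rw [h0]
  calc ∑ j ∈ Finset.univ.filter fun j => f j ≠ 0, |f j|
      ≤ (Finset.univ.filter fun j => f j ≠ 0).card • a :=
        Finset.sum_le_card_nsmul _ _ _ (fun j _ => hb j)
    _ = (Finset.univ.filter fun j => f j ≠ 0).card * a := nsmul_eq_mul _ _
    _ ≤ k * a := by
        exact mul_le_mul_of_nonneg_right (by exact_mod_cast hcard) ha

lemma specNorm_le_of_sparse {k : ℕ} {A : Matrix (Fin p) (Fin p) ℝ} {a : ℝ} (ha : 0 ≤ a)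
    (hs : IsKSparse k A) (hb : ∀ i j, |A i j| ≤ a) : specNorm A ≤ k * a := by
  unfold specNorm
  refine ContinuousLinearMap.opNorm_le_bound _ (by positivity) ?_
  intro x
  set u : Fin p → ℝ := (WithLp.equiv 2 (Fin p → ℝ)) x with hu
  have hx : ‖x‖ = Real.sqrt (∑ j, (u j) ^ 2) := by
    rw [EuclideanSpace.norm_eq]
    congr 1
    refine Finset.sum_congr rfl fun j _ => ?_
    rw [Real.norm_eq_abs, sq_abs]; rfl
  have happ : ‖LinearMap.toContinuousLinearMap (Matrix.toEuclideanLin A) x‖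
      = Real.sqrt (∑ i, (∑ j, A i j * u j) ^ 2) := by
    rw [LinearMap.coe_toContinuousLinearMap']
    rw [Matrix.toEuclideanLin_apply, EuclideanSpace.norm_eq]
    congr 1
    refine Finset.sum_congr rfl fun i _ => ?_
    rw [Real.norm_eq_abs, sq_abs]
    congr 1
  -- row and column sums
  have hrow : ∀ i, ∑ j, |A i j| ≤ k * a :=
    fun i => row_abs_sum_le ha _ (hs.1 i) (fun j => hb i j)
  have hcol : ∀ j, ∑ i, |A i j| ≤ k * a :=
    fun j => row_abs_sum_le ha _ (hs.2 j) (fun i => hb i j)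
  have key : ∑ i, (∑ j, A i j * u j) ^ 2 ≤ (↑k * a) ^ 2 * ∑ j, (u j) ^ 2 := by
    have step1 : ∀ i, (∑ j, A i j * u j) ^ 2
        ≤ (∑ j, |A i j|) * (∑ j, |A i j| * (u j) ^ 2) := by
      intro i
      have habs : |∑ j, A i j * u j| ≤ ∑ j, |A i j| * |u j| :=
        (Finset.abs_sum_le_sum_abs _ _).trans
          (le_of_eq (Finset.sum_congr rfl fun j _ => abs_mul _ _))
      have hcs : (∑ j, |A i j| * |u j|) ^ 2
          ≤ (∑ j, |A i j|) * (∑ j, |A i j| * (u j) ^ 2) := by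
        refine Finset.sum_sq_le_sum_mul_sum_of_sq_eq_mul _
          (fun j _ => abs_nonneg _) (fun j _ => mul_nonneg (abs_nonneg _) (sq_nonneg _))
          (fun j _ => ?_)
        rw [mul_pow, sq_abs (u j), sq, mul_assoc]
      calc (∑ j, A i j * u j) ^ 2 = |∑ j, A i j * u j| ^ 2 := (sq_abs _).symm
        _ ≤ (∑ j, |A i j| * |u j|) ^ 2 := by
            exact pow_le_pow_left₀ (abs_nonneg _) habs 2
        _ ≤ _ := hcs
    calc ∑ i, (∑ j, A i j * u j) ^ 2
        ≤ ∑ i, (∑ j, |A i j|) * (∑ j, |A i j| * (u j) ^ 2) :=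
          Finset.sum_le_sum fun i _ => step1 i
      _ ≤ ∑ i, (↑k * a) * (∑ j, |A i j| * (u j) ^ 2) := by
          refine Finset.sum_le_sum fun i _ => ?_
          refine mul_le_mul_of_nonneg_right (hrow i) ?_
          exact Finset.sum_nonneg fun j _ => mul_nonneg (abs_nonneg _) (sq_nonneg _)
      _ = (↑k * a) * ∑ j, (∑ i, |A i j|) * (u j) ^ 2 := by
          rw [← Finset.mul_sum, Finset.sum_comm]
          congr 1
          refine Finset.sum_congr rfl fun j _ => ?_
          rw [Finset.sum_mul]
      _ ≤ (↑k * a) * ∑ j, (↑k * a) * (u j) ^ 2 := by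
          refine mul_le_mul_of_nonneg_left ?_ (by positivity)
          exact Finset.sum_le_sum fun j _ =>
            mul_le_mul_of_nonneg_right (hcol j) (sq_nonneg _)
      _ = (↑k * a) ^ 2 * ∑ j, (u j) ^ 2 := by rw [← Finset.mul_sum]; ring
  rw [happ, hx]
  calc Real.sqrt (∑ i, (∑ j, A i j * u j) ^ 2)
      ≤ Real.sqrt ((↑k * a) ^ 2 * ∑ j, (u j) ^ 2) := Real.sqrt_le_sqrt key
    _ = (↑k * a) * Real.sqrt (∑ j, (u j) ^ 2) := by
        rw [Real.sqrt_mul (sq_nonneg _), Real.sqrt_sq (by positivity)]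

lemma hardThreshold_of_small {τ : ℝ} {z : Fin p → Fin p → ℝ}
    (hz : ∀ i j, ¬ τ ≤ |z i j|) : hardThreshold τ z = 0 := by
  ext i j
  simp [hardThreshold, hz i j]

lemma det_typeII {k : ℕ} {τ lam : ℝ} (hτ : 0 ≤ τ) {M : Matrix (Fin p) (Fin p) ℝ}
    (hMs : IsKSparse k M) (hMn : lam ≤ specNorm M) (hlam : 4 * (k : ℝ) * τ ≤ lam)
    {z : Fin p → Fin p → ℝ} (hz : ∀ i j, ¬ τ ≤ |z i j|) :
    2 * (k : ℝ) * τ ≤ specNorm (hardThreshold τ (fun i j => M i j + z i j)) := by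
  set x : Fin p → Fin p → ℝ := fun i j => M i j + z i j with hxdef
  set T : Matrix (Fin p) (Fin p) ℝ := hardThreshold τ x with hT
  have hzlt : ∀ i j, |z i j| < τ := fun i j => lt_of_not_ge (hz i j)
  have hDb : ∀ i j, |(M - T) i j| ≤ 2 * τ := by
    intro i j
    rw [Matrix.sub_apply]
    by_cases h : τ ≤ |x i j|
    · have hTij : T i j = x i j := by simp [hT, hardThreshold, h]
      rw [hTij]
      have : M i j - x i j = -(z i j) := by simp [hxdef]
      rw [this, abs_neg]
      linarith [hzlt i j]
    · have hTij : T i j = 0 := by simp [hT, hardThreshold, h]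
      rw [hTij, sub_zero]
      have hxlt : |x i j| < τ := lt_of_not_ge h
      have : M i j = x i j - z i j := by simp [hxdef]
      rw [this]
      calc |x i j - z i j| ≤ |x i j| + |z i j| := abs_sub _ _
        _ ≤ 2 * τ := by linarith [hzlt i j]
  have hDzero : ∀ i j, M i j = 0 → (M - T) i j = 0 := by
    intro i j h0
    have : x i j = z i j := by simp [hxdef, h0]
    have hTij : T i j = 0 := by simp [hT, hardThreshold, this, hz i j]
    simp [Matrix.sub_apply, h0, hTij]
  have hsub : ∀ i j, (M - T) i j ≠ 0 → M i j ≠ 0 := by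
    intro i j hne h0; exact hne (hDzero i j h0)
  have hDs : IsKSparse k (M - T) := by
    constructor
    · intro i
      refine le_trans (Finset.card_le_card ?_) (hMs.1 i)
      exact Finset.monotone_filter_right _ (fun j _ hj => hsub i j hj)
    · intro j
      refine le_trans (Finset.card_le_card ?_) (hMs.2 j)
      exact Finset.monotone_filter_right _ (fun i _ hi => hsub i j hi)
  have h1 : specNorm (M - T) ≤ (k : ℝ) * (2 * τ) :=
    specNorm_le_of_sparse (by positivity) hDs hDb
  have h2 : specNorm M ≤ specNorm T + specNorm (M - T) := specNorm_triangle_sub _ _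
  have : specNorm M ≤ specNorm T + (k : ℝ) * (2 * τ) := by linarith
  linarith

lemma gauss_halftail (c : ℝ) {τ : ℝ} (s : Set ℝ) (hs : MeasurableSet s)
    (hpt : ∀ x ∈ s, gaussianPDFReal 0 1 x ≤ Real.exp (-(τ^2)/2) * gaussianPDFReal c 1 x) :
    gaussianReal 0 1 s ≤ ENNReal.ofReal (Real.exp (-(τ^2)/2)) := by
  rw [gaussianReal_apply_eq_integral 0 one_ne_zero s]
  refine ENNReal.ofReal_le_ofReal ?_
  calc ∫ x in s, gaussianPDFReal 0 1 x
      ≤ ∫ x in s, Real.exp (-(τ^2)/2) * gaussianPDFReal c 1 x := by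
        refine setIntegral_mono_on (integrable_gaussianPDFReal 0 1).restrict
          (((integrable_gaussianPDFReal c 1).const_mul _).restrict) hs hpt
    _ ≤ ∫ x, Real.exp (-(τ^2)/2) * gaussianPDFReal c 1 x := by
        refine setIntegral_le_integral ((integrable_gaussianPDFReal c 1).const_mul _) ?_
        exact ae_of_all _ fun x => mul_nonneg (Real.exp_nonneg _) (gaussianPDFReal_nonneg _ _ _)
    _ = Real.exp (-(τ^2)/2) := by
        rw [integral_const_mul, integral_gaussianPDFReal_eq_one c one_ne_zero, mul_one]

lemma exp_mul_aux (C e1 e2 t : ℝ) (hC : 0 ≤ C) (h : e1 ≤ e2 + t) :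
    C * rexp e1 ≤ rexp t * (C * rexp e2) := by
  rw [mul_comm (rexp t), mul_assoc, ← Real.exp_add]
  exact mul_le_mul_of_nonneg_left (Real.exp_le_exp.mpr (by linarith)) hC

lemma gauss_pdf_bound_right {τ : ℝ} (hτ : 0 ≤ τ) {x : ℝ} (hx : τ ≤ x) :
    gaussianPDFReal 0 1 x ≤ Real.exp (-(τ^2)/2) * gaussianPDFReal τ 1 x := by
  unfold gaussianPDFReal
  refine exp_mul_aux _ _ _ _ (by positivity) ?_
  push_cast
  nlinarith

lemma gauss_pdf_bound_left {τ : ℝ} (hτ : 0 ≤ τ) {x : ℝ} (hx : x ≤ -τ) :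
    gaussianPDFReal 0 1 x ≤ Real.exp (-(τ^2)/2) * gaussianPDFReal (-τ) 1 x := by
  unfold gaussianPDFReal
  refine exp_mul_aux _ _ _ _ (by positivity) ?_
  push_cast
  nlinarith

lemma gauss_tail {τ : ℝ} (hτ : 0 ≤ τ) :
    gaussianReal 0 1 {t : ℝ | τ ≤ |t|} ≤ ENNReal.ofReal (2 * Real.exp (-(τ^2)/2)) := by
  have hsub : {t : ℝ | τ ≤ |t|} ⊆ Set.Iic (-τ) ∪ Set.Ici τ := by
    intro t ht
    have ht' : τ ≤ |t| := ht
    rcases le_abs.mp ht' with h | h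
    · exact Or.inr h
    · exact Or.inl (by simp only [Set.mem_Iic]; linarith)
  calc gaussianReal 0 1 {t : ℝ | τ ≤ |t|}
      ≤ gaussianReal 0 1 (Set.Iic (-τ) ∪ Set.Ici τ) := measure_mono hsub
    _ ≤ gaussianReal 0 1 (Set.Iic (-τ)) + gaussianReal 0 1 (Set.Ici τ) := measure_union_le _ _
    _ ≤ ENNReal.ofReal (Real.exp (-(τ^2)/2)) + ENNReal.ofReal (Real.exp (-(τ^2)/2)) := by
        refine add_le_add ?_ ?_
        · exact gauss_halftail (-τ) _ measurableSet_Iic fun x hx =>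
            gauss_pdf_bound_left hτ hx
        · exact gauss_halftail τ _ measurableSet_Ici fun x hx =>
            gauss_pdf_bound_right hτ hx
    _ = ENNReal.ofReal (2 * Real.exp (-(τ^2)/2)) := by
        rw [← ENNReal.ofReal_add (Real.exp_nonneg _) (Real.exp_nonneg _)]
        ring_nf

lemma pi_eval_preimage_apply {ι : Type*} [Fintype ι] {α : ι → Type*}
    [∀ i, MeasurableSpace (α i)] (μ : ∀ i, Measure (α i)) [∀ i, IsProbabilityMeasure (μ i)]
    (i : ι) {s : Set (α i)} (hs : MeasurableSet s) :
    Measure.pi μ (Function.eval i ⁻¹' s) = μ i s := by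
  classical
  have hset : Function.eval i ⁻¹' s
      = Set.pi Set.univ (Function.update (fun j => (Set.univ : Set (α j))) i s) := by
    ext z
    simp only [Set.mem_preimage, Set.mem_univ_pi]
    constructor
    · intro h j
      by_cases hj : j = i
      · subst hj; simpa using h
      · simp [Function.update_of_ne hj]
    · intro h
      have := h i
      simpa using this
  rw [hset, Measure.pi_pi]
  rw [Finset.prod_eq_single i (fun j _ hj => by simp [Function.update_of_ne hj]) (by simp)]
  simp

lemma measurableSet_tail (τ : ℝ) : MeasurableSet {t : ℝ | τ ≤ |t|} := by
  have : {t : ℝ | τ ≤ |t|} = (fun t : ℝ => |t|) ⁻¹' Set.Ici τ := rfl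
  rw [this]
  exact continuous_abs.measurable measurableSet_Ici

lemma stdGauss_entry {p : ℕ} (i j : Fin p) {s : Set ℝ} (hs : MeasurableSet s) :
    stdGaussMatrix p {z | z i j ∈ s} = gaussianReal 0 1 s := by
  have hset : {z : Fin p → Fin p → ℝ | z i j ∈ s}
      = Function.eval i ⁻¹' (Function.eval j ⁻¹' s) := rfl
  rw [hset]
  unfold stdGaussMatrix
  rw [pi_eval_preimage_apply _ i ((measurable_pi_apply j) hs),
    pi_eval_preimage_apply _ j hs]

lemma stdGauss_bad (p : ℕ) {τ : ℝ} (hτ : 0 ≤ τ) :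
    stdGaussMatrix p {z | ∃ i j, τ ≤ |z i j|}
      ≤ (p : ℝ≥0∞) * ((p : ℝ≥0∞) * ENNReal.ofReal (2 * Real.exp (-(τ^2)/2))) := by
  have hset : {z : Fin p → Fin p → ℝ | ∃ i j, τ ≤ |z i j|}
      = ⋃ i, ⋃ j, {z | τ ≤ |z i j|} := by
    ext z; simp
  rw [hset]
  refine (measure_iUnion_le _).trans ?_
  have hentry : ∀ i j : Fin p, stdGaussMatrix p {z | τ ≤ |z i j|}
      ≤ ENNReal.ofReal (2 * Real.exp (-(τ^2)/2)) := by
    intro i j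
    have : {z : Fin p → Fin p → ℝ | τ ≤ |z i j|} = {z | z i j ∈ {t : ℝ | τ ≤ |t|}} := rfl
    rw [this, stdGauss_entry i j (measurableSet_tail τ)]
    exact gauss_tail hτ
  calc ∑' i : Fin p, stdGaussMatrix p (⋃ j, {z | τ ≤ |z i j|})
      ≤ ∑' i : Fin p, ∑' j : Fin p, stdGaussMatrix p {z | τ ≤ |z i j|} :=
        ENNReal.tsum_le_tsum fun i => measure_iUnion_le _
    _ ≤ ∑' _ : Fin p, ∑' _ : Fin p, ENNReal.ofReal (2 * Real.exp (-(τ^2)/2)) :=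
        ENNReal.tsum_le_tsum fun i => ENNReal.tsum_le_tsum fun j => hentry i j
    _ = (p : ℝ≥0∞) * ((p : ℝ≥0∞) * ENNReal.ofReal (2 * Real.exp (-(τ^2)/2))) := by
        simp [tsum_fintype, Finset.sum_const, nsmul_eq_mul, mul_assoc]

noncomputable def specL (p : ℕ) :
    (Fin p → Fin p → ℝ) →ₗ[ℝ] (EuclideanSpace ℝ (Fin p) →L[ℝ] EuclideanSpace ℝ (Fin p)) where
  toFun A := LinearMap.toContinuousLinearMap (Matrix.toEuclideanLin (Matrix.of A))
  map_add' x y := by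
    simp only []
    have h : Matrix.of (x + y) = Matrix.of x + Matrix.of y := rfl
    rw [h, map_add, map_add]
  map_smul' c x := by
    simp only []
    have h : Matrix.of (c • x) = c • Matrix.of x := rfl
    rw [h, _root_.map_smul, _root_.map_smul]
    rfl

end Aux

/-- the entrywise-thresholding spectral test succeeds in the highly sparse regime. -/
theorem threshold_test_upper_bound (p k : ℕ) (hp : 1 ≤ p) (hk1 : 1 ≤ k) (hkp : k ≤ p)
    (ε : ℝ) (hε0 : 0 < ε) (hε1 : ε < 1)
    (τ : ℝ) (hτ : τ = Real.sqrt (2 * Real.log (4 * (p : ℝ) ^ 2 / ε)))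
    (lam : ℝ) (hlam : 4 * (k : ℝ) * τ ≤ lam) :
    PM (0 : Matrix (Fin p) (Fin p) ℝ) {x | 2 * (k : ℝ) * τ ≤ specNorm (hardThreshold τ x)} +
      ⨆ M ∈ ThetaSet p k lam,
        PM M {x | ¬ (2 * (k : ℝ) * τ ≤ specNorm (hardThreshold τ x))} ≤
      ENNReal.ofReal ε := by
  classical
  have hp0 : (0:ℝ) < p := by exact_mod_cast hp
  have hk0 : (0:ℝ) < k := by exact_mod_cast hk1
  have hp1 : (1:ℝ) ≤ p := by exact_mod_cast hp
  have hr : (1:ℝ) < 4 * (p : ℝ) ^ 2 / ε := by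
    rw [lt_div_iff₀ hε0]; nlinarith
  have hrpos : (0:ℝ) < 4 * (p : ℝ) ^ 2 / ε := by positivity
  have hlog : 0 < Real.log (4 * (p : ℝ) ^ 2 / ε) := Real.log_pos hr
  have hτpos : 0 < τ := by rw [hτ]; exact Real.sqrt_pos.mpr (by positivity)
  have hτsq : τ ^ 2 = 2 * Real.log (4 * (p : ℝ) ^ 2 / ε) := by
    rw [hτ]; exact Real.sq_sqrt (by positivity)
  have hexp : Real.exp (-(τ ^ 2) / 2) = ε / (4 * (p : ℝ) ^ 2) := by
    rw [hτsq, show -(2 * Real.log (4 * (p : ℝ) ^ 2 / ε)) / 2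
      = -Real.log (4 * (p : ℝ) ^ 2 / ε) by ring, Real.exp_neg, Real.exp_log hrpos, inv_div]
  set B : Set (Fin p → Fin p → ℝ) := {z | ∃ i j, τ ≤ |z i j|} with hBdef
  have hμB : stdGaussMatrix p B ≤ ENNReal.ofReal (ε / 2) := by
    refine (stdGauss_bad p hτpos.le).trans ?_
    rw [← ENNReal.ofReal_natCast p, ← ENNReal.ofReal_mul (by positivity),
      ← ENNReal.ofReal_mul (by positivity)]
    refine ENNReal.ofReal_le_ofReal (le_of_eq ?_)
    rw [hexp]
    field_simp
    ring
  have hPM0 : PM (0 : Matrix (Fin p) (Fin p) ℝ) = stdGaussMatrix p := by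
    unfold PM
    have h0 : (fun z : Fin p → Fin p → ℝ =>
        fun i j => (0 : Matrix (Fin p) (Fin p) ℝ) i j + z i j) = id := by
      funext z i j; simp
    rw [h0, Measure.map_id]
  have hSB : {x : Fin p → Fin p → ℝ | 2 * (k:ℝ) * τ ≤ specNorm (hardThreshold τ x)} ⊆ B := by
    intro x hx
    by_contra hxB
    have hall : ∀ i j, ¬ τ ≤ |x i j| := fun i j h => hxB ⟨i, j, h⟩
    have hx' : 2 * (k:ℝ) * τ ≤ specNorm (hardThreshold τ x) := hx
    rw [hardThreshold_of_small hall, specNorm_zero] at hx'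
    nlinarith
  have hI : PM (0 : Matrix (Fin p) (Fin p) ℝ)
      {x | 2 * (k:ℝ) * τ ≤ specNorm (hardThreshold τ x)} ≤ ENNReal.ofReal (ε / 2) := by
    rw [hPM0]; exact (measure_mono hSB).trans hμB
  have hII : ∀ M ∈ ThetaSet p k lam,
      PM M {x | ¬ (2 * (k:ℝ) * τ ≤ specNorm (hardThreshold τ x))} ≤ ENNReal.ofReal (ε / 2) := by
    intro M hM
    obtain ⟨hMs, hMn⟩ := hM
    have hf : Measurable (fun z : Fin p → Fin p → ℝ => fun i j => M i j + z i j) := by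
      refine measurable_pi_lambda _ fun i => measurable_pi_lambda _ fun j => ?_
      exact measurable_const.add ((measurable_pi_apply j).comp (measurable_pi_apply i))
    have hth : Measurable (fun x : Fin p → Fin p → ℝ =>
        (fun i j => if τ ≤ |x i j| then x i j else 0 : Fin p → Fin p → ℝ)) := by
      refine measurable_pi_lambda _ fun i => measurable_pi_lambda _ fun j => ?_
      have hms : MeasurableSet {x : Fin p → Fin p → ℝ | τ ≤ |x i j|} := by
        have he : {x : Fin p → Fin p → ℝ | τ ≤ |x i j|}
            = (fun x : Fin p → Fin p → ℝ => x i j) ⁻¹' {t : ℝ | τ ≤ |t|} := rfl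
        rw [he]
        exact ((measurable_pi_apply j).comp (measurable_pi_apply i)) (measurableSet_tail τ)
      exact Measurable.ite hms
        ((measurable_pi_apply j).comp (measurable_pi_apply i)) measurable_const
    have hcont : Continuous (fun A : Fin p → Fin p → ℝ => specNorm (Matrix.of A)) := by
      have hL : Continuous (specL p) := (specL p).continuous_of_finiteDimensional
      exact continuous_norm.comp hL
    have hg : Measurable (fun x : Fin p → Fin p → ℝ => specNorm (hardThreshold τ x)) :=
      hcont.measurable.comp hth
    have hS' : MeasurableSet
        {x : Fin p → Fin p → ℝ | ¬ (2 * (k:ℝ) * τ ≤ specNorm (hardThreshold τ x))} := by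
      have he : {x : Fin p → Fin p → ℝ | ¬ (2 * (k:ℝ) * τ ≤ specNorm (hardThreshold τ x))}
          = (fun x : Fin p → Fin p → ℝ => specNorm (hardThreshold τ x)) ⁻¹'
            Set.Iio (2 * (k:ℝ) * τ) := by
        ext x; simp [not_le]
      rw [he]
      exact hg measurableSet_Iio
    unfold PM
    rw [Measure.map_apply hf hS']
    refine (measure_mono ?_).trans hμB
    intro z hz
    simp only [Set.mem_preimage, Set.mem_setOf_eq] at hz
    by_contra hzB
    have hall : ∀ i j, ¬ τ ≤ |z i j| := fun i j h => hzB ⟨i, j, h⟩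
    exact hz (det_typeII hτpos.le hMs hMn hlam hall)
  calc PM (0 : Matrix (Fin p) (Fin p) ℝ)
        {x | 2 * (k:ℝ) * τ ≤ specNorm (hardThreshold τ x)} +
      ⨆ M ∈ ThetaSet p k lam,
        PM M {x | ¬ (2 * (k:ℝ) * τ ≤ specNorm (hardThreshold τ x))}
      ≤ ENNReal.ofReal (ε / 2) + ENNReal.ofReal (ε / 2) := add_le_add hI (iSup₂_le hII)
    _ = ENNReal.ofReal ε := by
        rw [← ENNReal.ofReal_add (by positivity) (by positivity), add_halves]
end

section
/- Let M be a p×p k-sparse real matrix, let Z be any p×p real matrix with max_{i,j}|Z_{ij}| < τ for some τ > 0, and let X = M + Z. Define the thresholded matrix M̂ with entries M̂_{ij} = X_{ij}·1{|X_{ij}| ≥ τ}. Then M̂ is k-sparse (M̂_{ij} = 0 whenever M_{ij} = 0), every row and column of M̂ − M has ℓ₁-norm at most 2kτ, and consequently ‖M̂ − M‖₂ ≤ 2kτ. -/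
/-- Schur test (symmetric form): if every row and column ℓ¹-norm is at most `a ≥ 0`,
then the spectral norm is at most `a`. -/
lemma specNorm_le_of_row_col (p : ℕ) (a : ℝ) (ha : 0 ≤ a)
    (A : Matrix (Fin p) (Fin p) ℝ)
    (hrow : ∀ i, ∑ j, |A i j| ≤ a) (hcol : ∀ j, ∑ i, |A i j| ≤ a) :
    specNorm A ≤ a := by
  rw [specNorm]
  apply ContinuousLinearMap.opNorm_le_bound _ ha
  intro x
  have hx : (0:ℝ) ≤ ‖x‖ := norm_nonneg x
  have key : ‖(Matrix.toEuclideanLin A) x‖ ^ 2 ≤ (a * ‖x‖) ^ 2 := by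
    rw [Matrix.toEuclideanLin_apply]
    have hnorm : ‖WithLp.toLp 2 (A.mulVec x.ofLp)‖ ^ 2
        = ∑ i, (∑ j, A i j * x j) ^ 2 := by
      rw [EuclideanSpace.norm_eq, Real.sq_sqrt (by positivity)]
      simp only [Real.norm_eq_abs, sq_abs]
      refine Finset.sum_congr rfl fun i _ => ?_
      congr 1
    rw [hnorm]
    have step1 : ∀ i : Fin p, (∑ j, A i j * x j) ^ 2 ≤ a * ∑ j, |A i j| * (x j) ^ 2 := by
      intro i
      have cs : (∑ j, A i j * x j) ^ 2 ≤ (∑ j, |A i j|) * ∑ j, |A i j| * (x j) ^ 2 :=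
        Finset.sum_sq_le_sum_mul_sum_of_sq_eq_mul _
          (fun j _ => abs_nonneg _)
          (fun j _ => mul_nonneg (abs_nonneg _) (sq_nonneg _))
          (fun j _ => by rw [mul_pow, ← sq_abs (A i j)]; ring)
      refine cs.trans ?_
      have hnn : (0:ℝ) ≤ ∑ j, |A i j| * (x j) ^ 2 :=
        Finset.sum_nonneg fun j _ => mul_nonneg (abs_nonneg _) (sq_nonneg _)
      exact mul_le_mul_of_nonneg_right (hrow i) hnn
    calc ∑ i, (∑ j, A i j * x j) ^ 2
        ≤ ∑ i : Fin p, a * ∑ j, |A i j| * (x j) ^ 2 :=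
          Finset.sum_le_sum fun i _ => step1 i
      _ = a * ∑ j : Fin p, (∑ i, |A i j|) * (x j) ^ 2 := by
          rw [← Finset.mul_sum, Finset.sum_comm]
          congr 1
          exact Finset.sum_congr rfl fun j _ => by rw [Finset.sum_mul]
      _ ≤ a * ∑ j : Fin p, a * (x j) ^ 2 := by
          apply mul_le_mul_of_nonneg_left _ ha
          exact Finset.sum_le_sum fun j _ =>
            mul_le_mul_of_nonneg_right (hcol j) (sq_nonneg _)
      _ = (a * ‖x‖) ^ 2 := by
          have hxsq : ‖x‖ ^ 2 = ∑ j, (x j) ^ 2 := by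
            rw [EuclideanSpace.norm_eq, Real.sq_sqrt (by positivity)]
            simp [Real.norm_eq_abs, sq_abs]
          rw [← Finset.mul_sum, mul_pow, hxsq]
          ring
  calc ‖(Matrix.toEuclideanLin A) x‖
      = Real.sqrt (‖(Matrix.toEuclideanLin A) x‖ ^ 2) := (Real.sqrt_sq (norm_nonneg _)).symm
    _ ≤ Real.sqrt ((a * ‖x‖) ^ 2) := Real.sqrt_le_sqrt key
    _ = a * ‖x‖ := Real.sqrt_sq (mul_nonneg ha hx)

/-- entrywise thresholding of a sparse matrix observed with small perturbation. -/
theorem threshold_estimate_of_sparse (p k : ℕ) (τ : ℝ) (hτ : 0 < τ)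
    (M Z X Mhat : Matrix (Fin p) (Fin p) ℝ)
    (hM : IsKSparse k M)
    (hZ : ∀ i j, |Z i j| < τ)
    (hX : X = M + Z)
    (hMhat : ∀ i j, Mhat i j = if τ ≤ |X i j| then X i j else 0) :
    (∀ i j, M i j = 0 → Mhat i j = 0) ∧
    IsKSparse k Mhat ∧
    (∀ i, ∑ j, |Mhat i j - M i j| ≤ 2 * k * τ) ∧
    (∀ j, ∑ i, |Mhat i j - M i j| ≤ 2 * k * τ) ∧
    specNorm (Mhat - M) ≤ 2 * k * τ := by
  -- support of Mhat is inside support of M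
  have hsupp : ∀ i j, M i j = 0 → Mhat i j = 0 := by
    intro i j h0
    rw [hMhat]
    have : |X i j| < τ := by
      rw [hX]; simp [h0]; exact hZ i j
    rw [if_neg (not_le.mpr this)]
  -- entrywise bound: differences are zero off the support of M and ≤ 2τ on it
  have hdiff0 : ∀ i j, M i j = 0 → |Mhat i j - M i j| = 0 := by
    intro i j h0
    rw [hsupp i j h0, h0, sub_zero, abs_zero]
  have hdiff : ∀ i j, |Mhat i j - M i j| ≤ 2 * τ := by
    intro i j
    rw [hMhat]
    by_cases h : τ ≤ |X i j|
    · rw [if_pos h]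
      have : X i j - M i j = Z i j := by rw [hX]; simp [Matrix.add_apply]
      rw [this]
      linarith [hZ i j, hτ]
    · rw [if_neg h, zero_sub, abs_neg]
      push_neg at h
      have : M i j = X i j - Z i j := by rw [hX]; simp [Matrix.add_apply]
      rw [this]
      calc |X i j - Z i j| ≤ |X i j| + |Z i j| := abs_sub _ _
        _ ≤ 2 * τ := by linarith [hZ i j]
  -- generic row-sum bound
  have hrowbound : ∀ i, ∑ j, |Mhat i j - M i j| ≤ 2 * k * τ := by
    intro i
    have hsub : (Finset.univ.filter fun j => Mhat i j - M i j ≠ 0) ⊆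
        Finset.univ.filter fun j => M i j ≠ 0 := by
      intro j hj
      simp only [Finset.mem_filter, Finset.mem_univ, true_and] at hj ⊢
      intro h0
      exact hj (by rw [hsupp i j h0, h0, sub_zero])
    calc ∑ j, |Mhat i j - M i j|
        = ∑ j ∈ Finset.univ.filter (fun j => Mhat i j - M i j ≠ 0), |Mhat i j - M i j| := by
          rw [Finset.sum_filter_of_ne]
          intro j _ h
          intro heq
          exact h (by rw [heq, abs_zero])
      _ ≤ ∑ _j ∈ Finset.univ.filter (fun j => Mhat i j - M i j ≠ 0), 2 * τ :=
          Finset.sum_le_sum fun j _ => hdiff i j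
      _ = (Finset.univ.filter fun j => Mhat i j - M i j ≠ 0).card * (2 * τ) := by
          rw [Finset.sum_const, nsmul_eq_mul]
      _ ≤ k * (2 * τ) := by
          apply mul_le_mul_of_nonneg_right _ (by linarith)
          exact_mod_cast (Finset.card_le_card hsub).trans (hM.1 i)
      _ = 2 * k * τ := by ring
  have hcolbound : ∀ j, ∑ i, |Mhat i j - M i j| ≤ 2 * k * τ := by
    intro j
    have hsub : (Finset.univ.filter fun i => Mhat i j - M i j ≠ 0) ⊆
        Finset.univ.filter fun i => M i j ≠ 0 := by
      intro i hi
      simp only [Finset.mem_filter, Finset.mem_univ, true_and] at hi ⊢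
      intro h0
      exact hi (by rw [hsupp i j h0, h0, sub_zero])
    calc ∑ i, |Mhat i j - M i j|
        = ∑ i ∈ Finset.univ.filter (fun i => Mhat i j - M i j ≠ 0), |Mhat i j - M i j| := by
          rw [Finset.sum_filter_of_ne]
          intro i _ h heq
          exact h (by rw [heq, abs_zero])
      _ ≤ ∑ _i ∈ Finset.univ.filter (fun i => Mhat i j - M i j ≠ 0), 2 * τ :=
          Finset.sum_le_sum fun i _ => hdiff i j
      _ = (Finset.univ.filter fun i => Mhat i j - M i j ≠ 0).card * (2 * τ) := by
          rw [Finset.sum_const, nsmul_eq_mul]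
      _ ≤ k * (2 * τ) := by
          apply mul_le_mul_of_nonneg_right _ (by linarith)
          exact_mod_cast (Finset.card_le_card hsub).trans (hM.2 j)
      _ = 2 * k * τ := by ring
  refine ⟨hsupp, ⟨?_, ?_⟩, hrowbound, hcolbound, ?_⟩
  · intro i
    refine le_trans (Finset.card_le_card ?_) (hM.1 i)
    intro j hj
    simp only [Finset.mem_filter, Finset.mem_univ, true_and] at hj ⊢
    intro h0
    exact hj (hsupp i j h0)
  · intro j
    refine le_trans (Finset.card_le_card ?_) (hM.2 j)
    intro i hi
    simp only [Finset.mem_filter, Finset.mem_univ, true_and] at hi ⊢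
    intro h0
    exact hi (hsupp i j h0)
  · apply specNorm_le_of_row_col p (2 * k * τ) (by positivity)
    · intro i; simpa [Matrix.sub_apply] using hrowbound i
    · intro j; simpa [Matrix.sub_apply] using hcolbound j
end

section
/- Let Θ′ be a measurable parameter space, θ ↦ P_θ a Markov kernel from Θ′ to a sample space (𝒳, ℬ), and Θ₀, Θ₁ ⊆ Θ′ measurable subsets. Define ℰ(Θ₀,Θ₁) = inf_{A ∈ ℬ} sup{P_{θ₀}(A) + P_{θ₁}(𝒳∖A) : θ₀ ∈ Θ₀, θ₁ ∈ Θ₁}. Let π₀, π₁ be probability measures on Θ′ and P_{π_i}(·) = ∫ P_θ(·) dπ_i(θ) the induced mixtures. Suppose TV(P_{π₀}, P_{π₁}) ≤ 1 − δ for some δ ∈ [0,1], and π_i(Θ_i) ≥ 1 − ε_i for i = 0,1 with ε₀, ε₁ ∈ [0,1). Then ℰ(Θ₀,Θ₁) ≥ δ − ε₀ − ε₁. -/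
open MeasureTheory ProbabilityTheory
open scoped ENNReal

/-- Total variation distance between two measures, as a supremum over measurable sets. -/
noncomputable def tvDist {𝒳 : Type*} [MeasurableSpace 𝒳] (P Q : Measure 𝒳) : ℝ≥0∞ :=
  ⨆ (A : Set 𝒳) (_ : MeasurableSet A), max (P A - Q A) (Q A - P A)

/-- Le Cam-type lower bound for testing with approximately supported priors. -/
theorem test_lower_bound_from_priors
    (Θ' 𝒳 : Type*) [MeasurableSpace Θ'] [MeasurableSpace 𝒳]
    (κ : Kernel Θ' 𝒳) [IsMarkovKernel κ]
    (Θ₀ Θ₁ : Set Θ') (hΘ₀ : MeasurableSet Θ₀) (hΘ₁ : MeasurableSet Θ₁)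
    (π₀ π₁ : Measure Θ') [IsProbabilityMeasure π₀] [IsProbabilityMeasure π₁]
    (δ ε₀ ε₁ : ℝ) (hδ0 : 0 ≤ δ) (hδ1 : δ ≤ 1)
    (hε₀0 : 0 ≤ ε₀) (hε₀1 : ε₀ < 1) (hε₁0 : 0 ≤ ε₁) (hε₁1 : ε₁ < 1)
    (htv : tvDist (π₀.bind κ) (π₁.bind κ) ≤ ENNReal.ofReal (1 - δ))
    (hπ₀ : ENNReal.ofReal (1 - ε₀) ≤ π₀ Θ₀)
    (hπ₁ : ENNReal.ofReal (1 - ε₁) ≤ π₁ Θ₁) :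
    ENNReal.ofReal (δ - ε₀ - ε₁) ≤
      ⨅ (A : Set 𝒳) (_ : MeasurableSet A),
        ⨆ θ₀ ∈ Θ₀, ⨆ θ₁ ∈ Θ₁, (κ θ₀ A + κ θ₁ Aᶜ) := by
  -- Θ₀ and Θ₁ are nonempty
  have hΘ₀ne : Θ₀.Nonempty := by
    rw [Set.nonempty_iff_ne_empty]
    rintro rfl
    simp only [measure_empty, nonpos_iff_eq_zero, ENNReal.ofReal_eq_zero] at hπ₀
    linarith
  have hΘ₁ne : Θ₁.Nonempty := by
    rw [Set.nonempty_iff_ne_empty]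
    rintro rfl
    simp only [measure_empty, nonpos_iff_eq_zero, ENNReal.ofReal_eq_zero] at hπ₁
    linarith
  -- complement masses
  have hcompl : ∀ (π : Measure Θ') (Θs : Set Θ'), IsProbabilityMeasure π → MeasurableSet Θs →
      ∀ ε : ℝ, ε ≤ 1 → ENNReal.ofReal (1 - ε) ≤ π Θs → π Θsᶜ ≤ ENNReal.ofReal ε := by
    intro π Θs hπ hΘs ε hε hle
    have h1 : π Θsᶜ = 1 - π Θs := prob_compl_eq_one_sub hΘs
    have h2 : (1 : ℝ≥0∞) - π Θs ≤ 1 - ENNReal.ofReal (1 - ε) := tsub_le_tsub_left hle 1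
    have h3 : (1 : ℝ≥0∞) - ENNReal.ofReal (1 - ε) = ENNReal.ofReal ε := by
      rw [← ENNReal.ofReal_one, ← ENNReal.ofReal_sub _ (by linarith : (0:ℝ) ≤ 1 - ε)]
      norm_num
    rw [h1]; rw [h3] at h2; exact h2
  have hc₀ : π₀ Θ₀ᶜ ≤ ENNReal.ofReal ε₀ := hcompl π₀ Θ₀ inferInstance hΘ₀ ε₀ hε₀1.le hπ₀
  have hc₁ : π₁ Θ₁ᶜ ≤ ENNReal.ofReal ε₁ := hcompl π₁ Θ₁ inferInstance hΘ₁ ε₁ hε₁1.le hπ₁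
  refine le_iInf fun A => le_iInf fun hA => ?_
  have hAc : MeasurableSet Aᶜ := hA.compl
  -- key bound: mixture mass ≤ sup over the set + complement mass
  have key : ∀ (π : Measure Θ') (Θs : Set Θ'), IsProbabilityMeasure π → MeasurableSet Θs →
      ∀ (B : Set 𝒳), MeasurableSet B →
      π.bind κ B ≤ (⨆ θ ∈ Θs, κ θ B) + π Θsᶜ := by
    intro π Θs hπ hΘs B hB
    rw [Measure.bind_apply hB κ.measurable.aemeasurable,
      ← lintegral_add_compl (fun θ => κ θ B) hΘs]
    gcongr
    · calc ∫⁻ θ in Θs, κ θ B ∂π ≤ ∫⁻ _ in Θs, (⨆ θ ∈ Θs, κ θ B) ∂π :=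
            setLIntegral_mono measurable_const (fun θ hθ => le_biSup (fun θ => κ θ B) hθ)
        _ = (⨆ θ ∈ Θs, κ θ B) * π Θs := setLIntegral_const _ _
        _ ≤ (⨆ θ ∈ Θs, κ θ B) * 1 := by gcongr; exact prob_le_one
        _ = _ := mul_one _
    · calc ∫⁻ θ in Θsᶜ, κ θ B ∂π ≤ ∫⁻ _ in Θsᶜ, (1:ℝ≥0∞) ∂π :=
            setLIntegral_mono measurable_const (fun θ _ => prob_le_one)
        _ = 1 * π Θsᶜ := setLIntegral_const _ _
        _ = π Θsᶜ := one_mul _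
  set P₀ := π₀.bind κ with hP₀
  set P₁ := π₁.bind κ with hP₁d
  have hP₁univ : P₁ Set.univ = 1 := by
    rw [hP₁d, Measure.bind_apply MeasurableSet.univ κ.measurable.aemeasurable]
    simp
  -- from TV bound
  have htv' : P₁ A - P₀ A ≤ ENNReal.ofReal (1 - δ) := by
    refine le_trans ?_ htv
    exact le_trans (le_max_right _ _) (le_iSup₂ (f := fun A _ => max (P₀ A - P₁ A) (P₁ A - P₀ A)) A hA)
  have hP₁le : P₁ A ≤ ENNReal.ofReal (1 - δ) + P₀ A := by
    rw [add_comm]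
    exact tsub_le_iff_right.mp (tsub_le_iff_left.mpr (tsub_le_iff_right.mp htv'))
  have hP₁prob : IsProbabilityMeasure P₁ := ⟨hP₁univ⟩
  have hP₁fin : P₁ A ≠ ∞ := measure_ne_top _ _
  have hsum : P₁ A + P₁ Aᶜ = 1 := by
    rw [measure_add_measure_compl hA, hP₁univ]
  -- δ ≤ P₀ A + P₁ Aᶜ
  have hδle : ENNReal.ofReal δ ≤ P₀ A + P₁ Aᶜ := by
    rw [← ENNReal.add_le_add_iff_right hP₁fin]
    calc ENNReal.ofReal δ + P₁ A
        ≤ ENNReal.ofReal δ + (ENNReal.ofReal (1 - δ) + P₀ A) := by gcongr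
      _ = (ENNReal.ofReal δ + ENNReal.ofReal (1 - δ)) + P₀ A := by ring
      _ = 1 + P₀ A := by
          rw [← ENNReal.ofReal_add hδ0 (by linarith)]
          norm_num
      _ = P₀ A + (P₁ A + P₁ Aᶜ) := by rw [hsum, add_comm]
      _ = P₀ A + P₁ Aᶜ + P₁ A := by ring
  -- sum of sups ≤ double sup
  set D := ⨆ θ₀ ∈ Θ₀, ⨆ θ₁ ∈ Θ₁, (κ θ₀ A + κ θ₁ Aᶜ) with hD
  have hDS : (⨆ θ ∈ Θ₀, κ θ A) + (⨆ θ ∈ Θ₁, κ θ Aᶜ) ≤ D := by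
    rw [ENNReal.biSup_add hΘ₀ne]
    refine iSup₂_le fun θ₀ hθ₀ => ?_
    rw [ENNReal.add_biSup hΘ₁ne]
    refine iSup₂_le fun θ₁ hθ₁ => ?_
    exact le_iSup₂_of_le θ₀ hθ₀ (le_iSup₂_of_le θ₁ hθ₁ le_rfl)
  -- combine
  have hmain : ENNReal.ofReal δ ≤ D + ENNReal.ofReal (ε₀ + ε₁) := by
    calc ENNReal.ofReal δ ≤ P₀ A + P₁ Aᶜ := hδle
      _ ≤ ((⨆ θ ∈ Θ₀, κ θ A) + π₀ Θ₀ᶜ) + ((⨆ θ ∈ Θ₁, κ θ Aᶜ) + π₁ Θ₁ᶜ) := by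
          gcongr
          · exact key π₀ Θ₀ inferInstance hΘ₀ A hA
          · exact key π₁ Θ₁ inferInstance hΘ₁ Aᶜ hAc
      _ ≤ ((⨆ θ ∈ Θ₀, κ θ A) + (⨆ θ ∈ Θ₁, κ θ Aᶜ)) + (ENNReal.ofReal ε₀ + ENNReal.ofReal ε₁) := by
          rw [show ∀ a b c d : ℝ≥0∞, (a + b) + (c + d) = (a + c) + (b + d) from fun a b c d => by ring]
          gcongr
      _ ≤ D + ENNReal.ofReal (ε₀ + ε₁) := by
          rw [ENNReal.ofReal_add hε₀0 hε₁0]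
          gcongr
  have : ENNReal.ofReal (δ - ε₀ - ε₁) = ENNReal.ofReal δ - ENNReal.ofReal (ε₀ + ε₁) := by
    rw [← ENNReal.ofReal_sub _ (by linarith)]
    ring_nf
  rw [this, tsub_le_iff_right]
  exact hmain
end

section
/- Let m ≥ 1, let γ = N(0, I_m) be the standard Gaussian distribution on ℝ^m, and let P be an arbitrary probability distribution on ℝ^m. Then, as an identity in [0, ∞], χ²(γ * P ‖ γ) = E[exp(⟨X, X̃⟩)] − 1, where * denotes convolution, ⟨·,·⟩ is the Euclidean inner product, and X, X̃ are independent random vectors each with distribution P. -/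
open MeasureTheory ProbabilityTheory
open scoped ENNReal

noncomputable section

/-- χ²-divergence: `∫ (dP/dQ − 1)² dQ` if `P ≪ Q`, and `∞` otherwise. -/
def chiSqDiv {X : Type*} [MeasurableSpace X] (P Q : Measure X) : ℝ≥0∞ :=
  @ite _ (P ≪ Q) (Classical.propDecidable _)
    (∫⁻ x, ENNReal.ofReal (((P.rnDeriv Q x).toReal - 1) ^ 2) ∂Q) ⊤

/-- Convolution of two measures on an additive group. -/
def mconv {X : Type*} [MeasurableSpace X] [Add X] (P Q : Measure X) : Measure X :=
  (P.prod Q).map (fun q => q.1 + q.2)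

/-- The standard Gaussian distribution `N(0, I_m)` on `ℝ^m`. -/
def stdGaussVec (m : ℕ) : Measure (Fin m → ℝ) :=
  Measure.pi fun _ => gaussianReal 0 1

end

theorem my_lintegral_pi_prod {n : ℕ} {α : Type*} [MeasurableSpace α]
    (μ : Fin n → Measure α) [∀ i, SigmaFinite (μ i)]
    {f : Fin n → α → ℝ≥0∞} (hf : ∀ i, Measurable (f i)) :
    ∫⁻ x, ∏ i, f i (x i) ∂(Measure.pi μ) = ∏ i, ∫⁻ a, f i a ∂(μ i) := by
  induction n with
  | zero => simp
  | succ n ih =>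
      have hmp := (measurePreserving_piFinSuccAbove μ 0).symm
      calc
        ∫⁻ x, ∏ i, f i (x i) ∂(Measure.pi μ)
            = ∫⁻ p : α × (Fin n → α),
                f 0 p.1 * ∏ j : Fin n, f j.succ (p.2 j)
                ∂((μ 0).prod (Measure.pi fun j => μ j.succ)) := by
          have : (fun j : Fin n => μ ((0 : Fin (n+1)).succAbove j)) = fun j => μ j.succ := by
            funext j; rw [Fin.zero_succAbove]
          rw [← this, ← hmp.map_eq, lintegral_map_equiv]
          refine lintegral_congr fun p => ?_
          simp_rw [MeasurableEquiv.piFinSuccAbove_symm_apply, Fin.insertNthEquiv,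
            Equiv.coe_fn_mk, Fin.insertNth_zero]
          rw [Fin.prod_univ_succ]
          simp
        _ = (∫⁻ a, f 0 a ∂(μ 0)) * ∫⁻ x : Fin n → α, ∏ j : Fin n, f j.succ (x j)
              ∂(Measure.pi fun j => μ j.succ) :=
          by
          have hg : Measurable fun x : Fin n → α => ∏ j : Fin n, f j.succ (x j) :=
            Finset.measurable_prod _ fun j _ => (hf j.succ).comp (measurable_pi_apply j)
          exact lintegral_prod_mul (hf 0).aemeasurable hg.aemeasurable
        _ = (∫⁻ a, f 0 a ∂(μ 0)) * ∏ j : Fin n, ∫⁻ a, f j.succ a ∂(μ j.succ) := by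
          rw [ih (fun j => μ j.succ) (f := fun j => f j.succ) (fun j => hf j.succ)]
        _ = ∏ i, ∫⁻ a, f i a ∂(μ i) :=
          (Fin.prod_univ_succ fun i => ∫⁻ a, f i a ∂(μ i)).symm


theorem my_gauss_shift (c : ℝ) :
    gaussianReal c 1 = (gaussianReal 0 1).withDensity
      (fun y => ENNReal.ofReal (Real.exp (c * y - c ^ 2 / 2))) := by
  rw [gaussianReal_of_var_ne_zero c one_ne_zero,
    gaussianReal_of_var_ne_zero 0 one_ne_zero,
    ← withDensity_mul _ (measurable_gaussianPDF 0 1)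
      (by fun_prop : Measurable fun y => ENNReal.ofReal (Real.exp (c * y - c ^ 2 / 2)))]
  congr 1
  funext y
  simp only [Pi.mul_apply, gaussianPDF]
  rw [← ENNReal.ofReal_mul (gaussianPDFReal_nonneg 0 1 y)]
  congr 1
  simp only [gaussianPDFReal]
  rw [mul_assoc _ (Real.exp _) (Real.exp _), ← Real.exp_add]
  congr 1
  push_cast
  ring


theorem my_oneD_mp (c : ℝ) : MeasurePreserving (fun z : ℝ => z + c)
      (gaussianReal 0 1) (gaussianReal c 1) := by
  refine ⟨measurable_add_const c, ?_⟩
  have h := gaussianReal_map_add_const (μ := 0) (v := 1) c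
  rw [zero_add] at h
  exact h

instance stdGaussVec_prob (m : ℕ) : IsProbabilityMeasure (stdGaussVec m) := by
  unfold stdGaussVec; infer_instance

theorem my_pi_gauss_shift (m : ℕ) (x : Fin m → ℝ) :
    Measure.pi (fun i => gaussianReal (x i) 1) = (stdGaussVec m).withDensity
      (fun y => ENNReal.ofReal (Real.exp (∑ i, x i * y i - (∑ i, x i ^ 2) / 2))) := by
  set h : Fin m → ℝ → ℝ≥0∞ := fun i a => ENNReal.ofReal (Real.exp (x i * a - x i ^ 2 / 2))
    with hh
  have hhm : ∀ i, Measurable (h i) := by intro i; rw [hh]; fun_prop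
  have hD : ∀ y : Fin m → ℝ,
      ENNReal.ofReal (Real.exp (∑ i, x i * y i - (∑ i, x i ^ 2) / 2)) = ∏ i, h i (y i) := by
    intro y
    rw [hh]
    rw [← ENNReal.ofReal_prod_of_nonneg (fun i _ => (Real.exp_pos _).le), ← Real.exp_sum]
    congr 2
    rw [Finset.sum_sub_distrib, ← Finset.sum_div]
  refine Measure.pi_eq fun s hs => ?_
  rw [withDensity_apply _ (MeasurableSet.univ_pi hs)]
  have hind : ∀ y : Fin m → ℝ, (Set.univ.pi s).indicator
      (fun y => ENNReal.ofReal (Real.exp (∑ i, x i * y i - (∑ i, x i ^ 2) / 2))) y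
      = ∏ i, (s i).indicator (h i) (y i) := by
    intro y
    by_cases hy : y ∈ Set.univ.pi s
    · rw [Set.indicator_of_mem hy, hD]
      exact Finset.prod_congr rfl fun i _ =>
        (Set.indicator_of_mem (hy i (Set.mem_univ i)) _).symm
    · rw [Set.indicator_of_notMem hy]
      have hex : ∃ i, y i ∉ s i := by
        by_contra hcon
        push_neg at hcon
        exact hy fun i _ => hcon i
      obtain ⟨i, hi⟩ := hex
      exact (Finset.prod_eq_zero (Finset.mem_univ i)
        (by rw [Set.indicator_of_notMem hi])).symm
  rw [← lintegral_indicator (MeasurableSet.univ_pi hs)]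
  rw [lintegral_congr hind, stdGaussVec,
    my_lintegral_pi_prod _ (fun i => (hhm i).indicator (hs i))]
  refine Finset.prod_congr rfl fun i _ => ?_
  rw [lintegral_indicator (hs i), my_gauss_shift (x i), withDensity_apply _ (hs i)]

theorem my_gauss_translate (m : ℕ) (x : Fin m → ℝ) :
    (stdGaussVec m).map (fun y => y + x) = (stdGaussVec m).withDensity
      (fun y => ENNReal.ofReal (Real.exp (∑ i, x i * y i - (∑ i, x i ^ 2) / 2))) := by
  have hmp : MeasurePreserving (fun (a : Fin m → ℝ) i => a i + x i)
      (Measure.pi fun _ => gaussianReal 0 1) (Measure.pi fun i => gaussianReal (x i) 1) :=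
    measurePreserving_pi _ _ fun i => my_oneD_mp (x i)
  have hfun : (fun y : Fin m → ℝ => y + x) = fun (a : Fin m → ℝ) i => a i + x i := by
    funext a; rfl
  rw [← my_pi_gauss_shift, hfun, stdGaussVec]
  exact hmp.map_eq

theorem my_gauss_density_one (m : ℕ) (x : Fin m → ℝ) :
    ∫⁻ y, ENNReal.ofReal (Real.exp (∑ i, x i * y i - (∑ i, x i ^ 2) / 2))
      ∂(stdGaussVec m) = 1 := by
  have h1 : ((stdGaussVec m).withDensity
      (fun y => ENNReal.ofReal (Real.exp (∑ i, x i * y i - (∑ i, x i ^ 2) / 2))))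
      Set.univ = 1 := by
    rw [← my_pi_gauss_shift]
    exact measure_univ
  rwa [withDensity_apply _ MeasurableSet.univ, Measure.restrict_univ] at h1

theorem my_gauss_mgf (m : ℕ) (t : Fin m → ℝ) :
    ∫⁻ y, ENNReal.ofReal (Real.exp (∑ i, t i * y i)) ∂(stdGaussVec m)
      = ENNReal.ofReal (Real.exp ((∑ i, t i ^ 2) / 2)) := by
  have : ∀ y : Fin m → ℝ, ENNReal.ofReal (Real.exp (∑ i, t i * y i))
      = ENNReal.ofReal (Real.exp ((∑ i, t i ^ 2) / 2))
        * ENNReal.ofReal (Real.exp (∑ i, t i * y i - (∑ i, t i ^ 2) / 2)) := by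
    intro y
    rw [← ENNReal.ofReal_mul (Real.exp_pos _).le, ← Real.exp_add]
    congr 2; ring
  rw [lintegral_congr this, lintegral_const_mul _ (by fun_prop),
    my_gauss_density_one, mul_one]


section Main

variable {m : ℕ}

/-- The exponential kernel appearing as relative density of the shifted Gaussian. -/
noncomputable def gKer (y x : Fin m → ℝ) : ℝ≥0∞ :=
  ENNReal.ofReal (Real.exp (∑ i, x i * y i - (∑ i, x i ^ 2) / 2))

theorem gKer_meas : Measurable (fun q : (Fin m → ℝ) × (Fin m → ℝ) => gKer q.1 q.2) := by
  unfold gKer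
  refine Measurable.ennreal_ofReal (Real.measurable_exp.comp ?_)
  refine Measurable.sub ?_ ?_
  · exact Finset.measurable_sum _ fun i _ =>
      ((measurable_pi_apply i).comp measurable_snd).mul
        ((measurable_pi_apply i).comp measurable_fst)
  · refine Measurable.div ?_ measurable_const
    exact Finset.measurable_sum _ fun i _ =>
      (((measurable_pi_apply i).comp measurable_snd).pow measurable_const)

theorem gKer_meas_left (x : Fin m → ℝ) : Measurable fun y : Fin m → ℝ => gKer y x := by
  unfold gKer
  refine Measurable.ennreal_ofReal (Real.measurable_exp.comp ?_)
  exact (Finset.measurable_sum _ fun i _ =>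
    by fun_prop).sub measurable_const

theorem gKer_meas_swap :
    Measurable (Function.uncurry fun (x z : Fin m → ℝ) => gKer z x) := by
  unfold Function.uncurry gKer
  refine Measurable.ennreal_ofReal (Real.measurable_exp.comp ?_)
  refine Measurable.sub ?_ (Measurable.div ?_ measurable_const)
  · exact Finset.measurable_sum _ fun i _ =>
      ((measurable_pi_apply i).comp measurable_fst).mul
        ((measurable_pi_apply i).comp measurable_snd)
  · exact Finset.measurable_sum _ fun i _ =>
      ((measurable_pi_apply i).comp measurable_fst).pow measurable_const

theorem my_conv_density (P : Measure (Fin m → ℝ)) [IsProbabilityMeasure P] :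
    mconv (stdGaussVec m) P = (stdGaussVec m).withDensity
      (fun y => ∫⁻ x, gKer y x ∂P) := by
  have hadd : Measurable fun q : (Fin m → ℝ) × (Fin m → ℝ) => q.1 + q.2 :=
    measurable_fst.add measurable_snd
  ext s hs
  rw [mconv, Measure.map_apply hadd hs, withDensity_apply _ hs]
  rw [← lintegral_indicator_one (hadd hs)]
  have h1 : ∀ q : (Fin m → ℝ) × (Fin m → ℝ),
      ((fun q : (Fin m → ℝ) × (Fin m → ℝ) => q.1 + q.2) ⁻¹' s).indicator 1 q
        = s.indicator (1 : (Fin m → ℝ) → ℝ≥0∞) (q.1 + q.2) := by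
    intro q
    rfl
  rw [lintegral_congr h1]
  have hind : Measurable fun z : Fin m → ℝ => s.indicator (1 : (Fin m → ℝ) → ℝ≥0∞) z :=
    measurable_one.indicator hs
  have hm2 : Measurable fun q : (Fin m → ℝ) × (Fin m → ℝ) =>
      s.indicator (1 : (Fin m → ℝ) → ℝ≥0∞) (q.1 + q.2) := hind.comp hadd
  rw [lintegral_prod_symm _ hm2.aemeasurable]
  have h2 : ∀ x : Fin m → ℝ, ∫⁻ w, s.indicator (1 : (Fin m → ℝ) → ℝ≥0∞) (w + x) ∂(stdGaussVec m)
      = ∫⁻ z, gKer z x ∂((stdGaussVec m).restrict s) := by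
    intro x
    rw [← lintegral_map hind (measurable_add_const x), my_gauss_translate m x]
    have : (fun y : Fin m → ℝ => ENNReal.ofReal
        (Real.exp (∑ i, x i * y i - (∑ i, x i ^ 2) / 2))) = fun y => gKer y x := rfl
    rw [this, lintegral_withDensity_eq_lintegral_mul _ (gKer_meas_left x) hind]
    rw [← lintegral_indicator hs]
    refine lintegral_congr fun z => ?_
    by_cases hz : z ∈ s
    · simp [Set.indicator_of_mem hz, mul_comm]
    · simp [Set.indicator_of_notMem hz]
  rw [lintegral_congr h2]
  rw [lintegral_lintegral_swap gKer_meas_swap.aemeasurable]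

theorem my_inner_gauss {m : ℕ} (x x' : Fin m → ℝ) :
    ∫⁻ y, gKer y x * gKer y x' ∂(stdGaussVec m)
      = ENNReal.ofReal (Real.exp (∑ i, x i * x' i)) := by
  have hpt : ∀ y : Fin m → ℝ, gKer y x * gKer y x'
      = ENNReal.ofReal (Real.exp (∑ i, x i * x' i)) *
        ENNReal.ofReal (Real.exp (∑ i, (x i + x' i) * y i - (∑ i, (x i + x' i) ^ 2) / 2)) := by
    intro y
    unfold gKer
    rw [← ENNReal.ofReal_mul (Real.exp_pos _).le, ← ENNReal.ofReal_mul (Real.exp_pos _).le,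
      ← Real.exp_add, ← Real.exp_add]
    congr 2
    have h1 : ∑ i, (x i + x' i) * y i = ∑ i, x i * y i + ∑ i, x' i * y i := by
      rw [← Finset.sum_add_distrib]
      exact Finset.sum_congr rfl fun i _ => by ring
    have h2 : ∑ i, (x i + x' i) ^ 2
        = ∑ i, x i ^ 2 + 2 * (∑ i, x i * x' i) + ∑ i, x' i ^ 2 := by
      rw [Finset.mul_sum, ← Finset.sum_add_distrib, ← Finset.sum_add_distrib]
      exact Finset.sum_congr rfl fun i _ => by ring
    rw [h1, h2]
    ring
  have hme : Measurable fun y : Fin m → ℝ =>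
      ENNReal.ofReal (Real.exp (∑ i, (x i + x' i) * y i - (∑ i, (x i + x' i) ^ 2) / 2)) := by
    have := gKer_meas_left (m := m) (x + x')
    simpa only [gKer, Pi.add_apply] using this
  have hone := my_gauss_density_one m (x + x')
  simp only [Pi.add_apply] at hone
  rw [lintegral_congr hpt, lintegral_const_mul _ hme, hone, mul_one]

theorem gKer_int_meas {m : ℕ} (P : Measure (Fin m → ℝ)) [SFinite P] :
    Measurable fun y : Fin m → ℝ => ∫⁻ x, gKer y x ∂P :=
  Measurable.lintegral_prod_right gKer_meas

theorem gKer_meas_right {m : ℕ} (y : Fin m → ℝ) :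
    Measurable fun x : Fin m → ℝ => gKer y x := by
  unfold gKer
  refine Measurable.ennreal_ofReal (Real.measurable_exp.comp ?_)
  refine Measurable.sub ?_ (Measurable.div ?_ measurable_const)
  · exact Finset.measurable_sum _ fun i _ => by fun_prop
  · exact Finset.measurable_sum _ fun i _ => (measurable_pi_apply i).pow measurable_const

theorem gKer_meas_pair {m : ℕ} :
    Measurable (Function.uncurry fun (y : Fin m → ℝ)
      (p : (Fin m → ℝ) × (Fin m → ℝ)) => gKer y p.1 * gKer y p.2) := by
  unfold Function.uncurry gKer
  refine Measurable.fun_mul ?_ ?_ <;>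
    refine Measurable.ennreal_ofReal (Real.measurable_exp.comp
      (Measurable.sub ?_ (Measurable.div ?_ measurable_const)))
  · exact Finset.measurable_sum _ fun i _ =>
      ((measurable_pi_apply i).comp (measurable_fst.comp measurable_snd)).mul
        ((measurable_pi_apply i).comp measurable_fst)
  · exact Finset.measurable_sum _ fun i _ =>
      ((measurable_pi_apply i).comp (measurable_fst.comp measurable_snd)).pow measurable_const
  · exact Finset.measurable_sum _ fun i _ =>
      ((measurable_pi_apply i).comp (measurable_snd.comp measurable_snd)).mul
        ((measurable_pi_apply i).comp measurable_fst)
  · exact Finset.measurable_sum _ fun i _ =>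
      ((measurable_pi_apply i).comp (measurable_snd.comp measurable_snd)).pow measurable_const

end Main


/-- Ingster–Suslina: χ²-divergence of a Gaussian location mixture. -/
theorem chiSq_gaussian_mixture (m : ℕ) (hm : 1 ≤ m)
    (P : Measure (Fin m → ℝ)) [IsProbabilityMeasure P] :
    chiSqDiv (mconv (stdGaussVec m) P) (stdGaussVec m) =
      (∫⁻ q, ENNReal.ofReal (Real.exp (∑ i, q.1 i * q.2 i)) ∂(P.prod P)) - 1 := by
  have hconv := my_conv_density (m := m) P
  have hfmeas := gKer_int_meas (m := m) P
  have hadd : Measurable fun q : (Fin m → ℝ) × (Fin m → ℝ) => q.1 + q.2 :=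
    measurable_fst.add measurable_snd
  have hWD : (stdGaussVec m).withDensity (fun y => ∫⁻ x, gKer y x ∂P) Set.univ = 1 := by
    rw [← hconv, mconv, Measure.map_apply hadd MeasurableSet.univ, Set.preimage_univ]
    exact measure_univ
  have hint : ∫⁻ y, (∫⁻ x, gKer y x ∂P) ∂(stdGaussVec m) = 1 := by
    rwa [withDensity_apply _ MeasurableSet.univ, Measure.restrict_univ] at hWD
  have hac : mconv (stdGaussVec m) P ≪ stdGaussVec m := by
    rw [hconv]; exact withDensity_absolutelyContinuous _ _
  have hrn : (mconv (stdGaussVec m) P).rnDeriv (stdGaussVec m)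
      =ᵐ[stdGaussVec m] fun y => ∫⁻ x, gKer y x ∂P := by
    rw [hconv]; exact Measure.rnDeriv_withDensity _ hfmeas
  rw [chiSqDiv, if_pos hac,
    lintegral_congr_ae (hrn.mono fun y hy => by rw [hy])]
  have hfin : ∀ᵐ y ∂(stdGaussVec m), (∫⁻ x, gKer y x ∂P) ≠ ∞ := by
    filter_upwards [ae_lt_top hfmeas (by rw [hint]; exact ENNReal.one_ne_top)] with y hy
    exact hy.ne
  have hLmeas : Measurable fun y =>
      ENNReal.ofReal (((∫⁻ x, gKer y x ∂P).toReal - 1) ^ 2) :=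
    (((hfmeas.ennreal_toReal.sub measurable_const).pow measurable_const)).ennreal_ofReal
  have key : ∀ᵐ y ∂(stdGaussVec m),
      ENNReal.ofReal (((∫⁻ x, gKer y x ∂P).toReal - 1) ^ 2) + 2 * (∫⁻ x, gKer y x ∂P)
        = (∫⁻ x, gKer y x ∂P) * (∫⁻ x, gKer y x ∂P) + 1 := by
    filter_upwards [hfin] with y hy
    set a := (∫⁻ x, gKer y x ∂P).toReal with ha
    have hfy : (∫⁻ x, gKer y x ∂P) = ENNReal.ofReal a := (ENNReal.ofReal_toReal hy).symm
    have ha0 : 0 ≤ a := ENNReal.toReal_nonneg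
    rw [hfy]
    have h2 : (2 : ℝ≥0∞) * ENNReal.ofReal a = ENNReal.ofReal (2 * a) := by
      rw [ENNReal.ofReal_mul (by norm_num : (0:ℝ) ≤ 2)]
      norm_num
    rw [h2, ← ENNReal.ofReal_mul ha0, ← ENNReal.ofReal_one,
      ← ENNReal.ofReal_add (sq_nonneg _) (by positivity),
      ← ENNReal.ofReal_add (mul_nonneg ha0 ha0) zero_le_one]
    congr 1
    ring
  have hsum := lintegral_congr_ae key
  rw [lintegral_add_left hLmeas, lintegral_add_right _ measurable_const,
    lintegral_const_mul 2 hfmeas, hint, lintegral_const, measure_univ, mul_one, one_mul] at hsum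
  have hS : ∫⁻ y, (∫⁻ x, gKer y x ∂P) * (∫⁻ x, gKer y x ∂P) ∂(stdGaussVec m)
      = ∫⁻ q, ENNReal.ofReal (Real.exp (∑ i, q.1 i * q.2 i)) ∂(P.prod P) := by
    have hsq : ∀ y : Fin m → ℝ, (∫⁻ x, gKer y x ∂P) * (∫⁻ x, gKer y x ∂P)
        = ∫⁻ p, gKer y p.1 * gKer y p.2 ∂(P.prod P) := fun y =>
      (lintegral_prod_mul (gKer_meas_right y).aemeasurable
        (gKer_meas_right y).aemeasurable).symm
    rw [lintegral_congr hsq, lintegral_lintegral_swap gKer_meas_pair.aemeasurable]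
    exact lintegral_congr fun p => my_inner_gauss p.1 p.2
  rw [← hS]
  have h4 : (∫⁻ y, (∫⁻ x, gKer y x ∂P) * (∫⁻ x, gKer y x ∂P) ∂(stdGaussVec m))
      = (∫⁻ y, ENNReal.ofReal (((∫⁻ x, gKer y x ∂P).toReal - 1) ^ 2) ∂(stdGaussVec m)) + 1 := by
    have h5 : (∫⁻ y, (∫⁻ x, gKer y x ∂P) * (∫⁻ x, gKer y x ∂P) ∂(stdGaussVec m)) + 1
        = ((∫⁻ y, ENNReal.ofReal (((∫⁻ x, gKer y x ∂P).toReal - 1) ^ 2) ∂(stdGaussVec m)) + 1) + 1 := by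
      rw [← hsum]
      ring
    exact WithTop.add_right_cancel ENNReal.one_ne_top h5
  rw [h4, ENNReal.add_sub_cancel_right ENNReal.one_ne_top]
end
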